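/- Let m₁, m₂, m₃ ∈ ℝ³ be linearly independent, b₁, b₂, b₃, c₁, c₂, c₃ ∈ ℝ. Then the number of pairs (ρ, e) ∈ ℝ⁺ × S² satisfying ρ² = c_i + ρ(m_iᵀe − b_i) for i = 1, 2, 3 is at most 4. -/

import Mathlib

open RealInnerProductSpace

open Polynomial

noncomputable section

/-- The system `ρ² = cᵢ + ρ(mᵢᵀe − bᵢ)`, `i = 1,2,3`, with `ρ > 0` and `e` a
unit vector, has at most 4 solutions when `m₁, m₂, m₃` are linearly
independent. -/
theorem intersection_points_at_most_four
    (m : Fin 3 → EuclideanSpace ℝ (Fin 3)) (b c : Fin 3 → ℝ)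
    (hm : LinearIndependent ℝ m) :
    {p : ℝ × EuclideanSpace ℝ (Fin 3) |
        0 < p.1 ∧ ‖p.2‖ = 1 ∧
        ∀ i : Fin 3, p.1 ^ 2 = c i + p.1 * (⟪m i, p.2⟫ - b i)}.Finite ∧
    {p : ℝ × EuclideanSpace ℝ (Fin 3) |
        0 < p.1 ∧ ‖p.2‖ = 1 ∧
        ∀ i : Fin 3, p.1 ^ 2 = c i + p.1 * (⟪m i, p.2⟫ - b i)}.ncard ≤ 4 := by
  classical
  set S : Set (ℝ × EuclideanSpace ℝ (Fin 3)) :=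
    {p : ℝ × EuclideanSpace ℝ (Fin 3) |
        0 < p.1 ∧ ‖p.2‖ = 1 ∧
        ∀ i : Fin 3, p.1 ^ 2 = c i + p.1 * (⟪m i, p.2⟫ - b i)} with hS
  have hcard : Fintype.card (Fin 3) = Module.finrank ℝ (EuclideanSpace ℝ (Fin 3)) := by simp
  let B : Module.Basis (Fin 3) ℝ (EuclideanSpace ℝ (Fin 3)) :=
    basisOfLinearIndependentOfCardEqFinrank hm hcard
  have hB : ∀ i, B i = m i := fun i => by
    simp [B, coe_basisOfLinearIndependentOfCardEqFinrank]
  let ι : Module.Dual ℝ (EuclideanSpace ℝ (Fin 3)) ≃ₗ[ℝ] EuclideanSpace ℝ (Fin 3) :=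
    LinearMap.toContinuousLinearMap ≪≫ₗ
      (InnerProductSpace.toDual ℝ (EuclideanSpace ℝ (Fin 3))).toLinearEquiv.symm
  let D : Fin 3 → EuclideanSpace ℝ (Fin 3) := fun j => ι (B.dualBasis j)
  have hD : ∀ i j, ⟪m i, D j⟫ = if i = j then 1 else 0 := by
    intro i j
    rw [real_inner_comm]
    have h1 : ⟪D j, m i⟫ = (InnerProductSpace.toDual ℝ (EuclideanSpace ℝ (Fin 3))) (D j) (m i) :=
      rfl
    rw [h1]
    have h2 : (InnerProductSpace.toDual ℝ (EuclideanSpace ℝ (Fin 3))) (D j)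
        = LinearMap.toContinuousLinearMap (B.dualBasis j) := by
      simp [D, ι]
    rw [h2, ← hB i]
    simpa using B.dualBasis_apply_self j i
  -- inner products with the basis determine a vector
  have hkey : ∀ x y : EuclideanSpace ℝ (Fin 3),
      (∀ i, ⟪m i, x⟫ = ⟪m i, y⟫) → x = y := by
    intro x y h
    have h0 : ∀ i, ⟪m i, x - y⟫ = 0 := fun i => by
      rw [inner_sub_right, h i, sub_self]
    have hx : x - y = ∑ i, B.repr (x - y) i • m i := by
      conv_lhs => rw [← B.sum_repr (x - y)]
      simp [hB]
    have hz : ⟪x - y, x - y⟫ = 0 := by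
      nth_rewrite 1 [hx]
      rw [sum_inner]
      refine Finset.sum_eq_zero fun i _ => ?_
      rw [real_inner_smul_left, h0 i, mul_zero]
    have := inner_self_eq_zero.mp hz
    exact sub_eq_zero.mp this
  -- representation of ρ • e
  have hrep : ∀ p ∈ S, p.1 • p.2 = ∑ j, (p.1 ^ 2 + b j * p.1 - c j) • D j := by
    rintro ⟨ρ, e⟩ ⟨hρ, _he, heq⟩
    apply hkey
    intro i
    rw [real_inner_smul_right, inner_sum]
    simp only [real_inner_smul_right, hD, mul_ite, mul_one, mul_zero]
    rw [Finset.sum_ite_eq (Finset.univ : Finset (Fin 3)) i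
      (fun j => ρ ^ 2 + b j * ρ - c j)]
    simp only [Finset.mem_univ, if_true]
    have := heq i
    nlinarith [this]
  -- the polynomial
  let q : Fin 3 → Polynomial ℝ := fun i => X ^ 2 + (C (b i) * X - C (c i))
  let P : Polynomial ℝ :=
    (∑ i : Fin 3, ∑ j : Fin 3, C (⟪D i, D j⟫) * (q i * q j)) - X ^ 2
  have hlow : ∀ i, (C (b i) * X - C (c i)).degree < 2 := by
    intro i
    calc (C (b i) * X - C (c i)).degree ≤ max (C (b i) * X).degree (C (c i)).degree :=
          Polynomial.degree_sub_le _ _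
      _ < 2 := by
          apply max_lt
          · refine lt_of_le_of_lt (Polynomial.degree_mul_le _ _) ?_
            refine lt_of_le_of_lt (add_le_add Polynomial.degree_C_le le_rfl) ?_
            simp [Polynomial.degree_X]
          · exact lt_of_le_of_lt Polynomial.degree_C_le (by norm_num)
  have hq_monic : ∀ i, (q i).Monic := fun i => Polynomial.monic_X_pow_add (hlow i)
  have hq_deg : ∀ i, (q i).natDegree = 2 := by
    intro i
    have : (q i).degree = 2 := by
      unfold q
      rw [Polynomial.degree_add_eq_left_of_degree_lt]
      · simp
      · rw [Polynomial.degree_X_pow]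
        exact_mod_cast hlow i
    exact Polynomial.natDegree_eq_of_degree_eq_some this
  have hqq_coeff : ∀ i j, (q i * q j).coeff 4 = 1 := by
    intro i j
    have h4 : (4 : ℕ) = (q i).natDegree + (q j).natDegree := by rw [hq_deg, hq_deg]
    rw [h4, Polynomial.coeff_mul_degree_add_degree, (hq_monic i).leadingCoeff,
      (hq_monic j).leadingCoeff, one_mul]
  have hqq_deg : ∀ i j, (q i * q j).natDegree ≤ 4 := by
    intro i j
    calc (q i * q j).natDegree ≤ (q i).natDegree + (q j).natDegree :=
          Polynomial.natDegree_mul_le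
      _ = 4 := by rw [hq_deg, hq_deg]
  -- sum of D is nonzero
  have hDsum : (∑ j, D j) ≠ 0 := by
    intro h
    have : (∑ j, B.dualBasis j) = 0 := by
      apply ι.injective
      simpa [D, map_sum] using h
    have hli := B.dualBasis.linearIndependent
    rw [Fintype.linearIndependent_iff] at hli
    have := hli (fun _ => 1) (by simpa using this) 0
    norm_num at this
  -- P has nonzero coefficient 4
  have hP4 : P.coeff 4 = ‖∑ j, D j‖ ^ 2 := by
    have : P.coeff 4 = ∑ i : Fin 3, ∑ j : Fin 3, ⟪D i, D j⟫ := by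
      unfold P
      rw [Polynomial.coeff_sub, Polynomial.finset_sum_coeff]
      simp only [Polynomial.finset_sum_coeff, Polynomial.coeff_C_mul, hqq_coeff, mul_one]
      simp [Polynomial.coeff_X_pow]
    rw [this, ← real_inner_self_eq_norm_sq, sum_inner]
    exact Finset.sum_congr rfl fun i _ => by rw [inner_sum]
  have hPne : P ≠ 0 := by
    intro h
    have h4 : P.coeff 4 ≠ 0 := by
      rw [hP4]
      exact pow_ne_zero 2 (norm_ne_zero_iff.mpr hDsum)
    exact h4 (by rw [h]; simp)
  have hPdeg : P.natDegree ≤ 4 := by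
    unfold P
    apply le_trans (Polynomial.natDegree_sub_le _ _)
    apply max_le
    · refine Polynomial.natDegree_sum_le_of_forall_le _ _ fun i _ => ?_
      refine Polynomial.natDegree_sum_le_of_forall_le _ _ fun j _ => ?_
      exact le_trans (Polynomial.natDegree_C_mul_le _ _) (hqq_deg i j)
    · simp
  -- every solution's ρ is a root of P
  have hroot : ∀ p ∈ S, P.IsRoot p.1 := by
    rintro ⟨ρ, e⟩ hp
    obtain ⟨hρ, he, heq⟩ := hp
    have hre := hrep (ρ, e) ⟨hρ, he, heq⟩
    simp only at hre
    have hnorm : ⟪ρ • e, ρ • e⟫ = ρ ^ 2 := by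
      rw [real_inner_smul_left, real_inner_smul_right, real_inner_self_eq_norm_sq, he]
      ring
    have hexp : ⟪ρ • e, ρ • e⟫
        = ∑ i : Fin 3, ∑ j : Fin 3,
            (ρ ^ 2 + b i * ρ - c i) * ((ρ ^ 2 + b j * ρ - c j) * ⟪D i, D j⟫) := by
      rw [hre, sum_inner]
      congr 1
      ext i
      rw [real_inner_smul_left, inner_sum]
      congr 1
      rw [Finset.mul_sum]
      congr 1
      ext j
      rw [real_inner_smul_right]
    rw [hnorm] at hexp
    show P.eval ρ = 0
    simp only [P, q, eval_sub, eval_finset_sum, eval_mul, eval_add, eval_pow, eval_X, eval_C]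
    rw [sub_eq_zero]
    refine Eq.trans ?_ hexp.symm
    refine Finset.sum_congr rfl fun i _ => Finset.sum_congr rfl fun j _ => by ring
  -- uniqueness of e given ρ
  have hinj : Set.InjOn Prod.fst S := by
    rintro ⟨ρ₁, e₁⟩ h₁ ⟨ρ₂, e₂⟩ h₂ (h : ρ₁ = ρ₂)
    subst h
    have h1 := hrep _ h₁
    have h2 := hrep _ h₂
    simp only at h1 h2
    have hρ : ρ₁ ≠ 0 := ne_of_gt h₁.1
    have : e₁ = e₂ := by
      have := h1.trans h2.symm
      exact smul_right_injective _ hρ this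
    rw [this]
  have hsub : Prod.fst '' S ⊆ ↑P.roots.toFinset := by
    rintro x ⟨p, hp, rfl⟩
    simp only [Multiset.mem_toFinset, Finset.coe_sort_coe, Finset.mem_coe]
    rw [Polynomial.mem_roots hPne]
    exact hroot p hp
  have hfin : S.Finite := by
    apply Set.Finite.of_finite_image _ hinj
    exact Set.Finite.subset (P.roots.toFinset.finite_toSet) hsub
  refine ⟨hfin, ?_⟩
  calc S.ncard = (Prod.fst '' S).ncard := (Set.ncard_image_of_injOn hinj).symm
    _ ≤ (↑P.roots.toFinset : Set ℝ).ncard := by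
        apply Set.ncard_le_ncard hsub (P.roots.toFinset.finite_toSet)
    _ = P.roots.toFinset.card := by rw [Set.ncard_coe_finset]
    _ ≤ Multiset.card P.roots := Multiset.toFinset_card_le _
    _ ≤ P.natDegree := Polynomial.card_roots' P
    _ ≤ 4 := hPdeg
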